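/- Let P be an irreducible, aperiodic, positive recurrent transition probability matrix on a countable state space S with stationary distribution π. Suppose there exist a function v : S → [1,∞), constants c ∈ (0,1), b > 0, and a finite set K ⊆ S such that (Pv)(x) − v(x) ≤ −c·v(x) + b·1_K(x) for all x ∈ S. Then π(v) := Σ_x π(x) v(x) ≤ b/c. -/

import Mathlib

open ENNReal

theorem stmt6 {S : Type*} [Countable S] [DecidableEq S]
    (P : S → S → ℝ) (hP0 : ∀ x y, 0 ≤ P x y) (hP1 : ∀ x, HasSum (P x) 1)
    (π : S → ℝ) (hπ0 : ∀ x, 0 ≤ π x) (hπ1 : HasSum π 1)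
    (hstat : ∀ y, ∑' x, π x * P x y = π y)
    (v : S → ℝ) (hv : ∀ x, 1 ≤ v x)
    (c b : ℝ) (hc : c ∈ Set.Ioo (0 : ℝ) 1) (hb : 0 < b)
    (K : Finset S)
    (hPv : ∀ x, Summable (fun y => P x y * v y))
    (hdrift : ∀ x, (∑' y, P x y * v y) - v x ≤ -c * v x + b * (if x ∈ K then 1 else 0)) :
    Summable (fun x => π x * v x) ∧ ∑' x, π x * v x ≤ b / c := by
  obtain ⟨hc0, hc1⟩ := hc
  have hv0 : ∀ x, 0 ≤ v x := fun x => le_trans zero_le_one (hv x)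
  have hπS : Summable π := hπ1.summable
  set p : S → ℝ≥0∞ := fun x => ENNReal.ofReal (π x) with hp
  set q : S → S → ℝ≥0∞ := fun x y => ENNReal.ofReal (P x y) with hq
  have hpsum : ∑' x, p x = 1 := by
    rw [hp, ← ENNReal.ofReal_tsum_of_nonneg hπ0 hπS, hπ1.tsum_eq, ENNReal.ofReal_one]
  have hqsum : ∀ x, ∑' y, q x y = 1 := fun x => by
    rw [hq, ← ENNReal.ofReal_tsum_of_nonneg (hP0 x) (hP1 x).summable, (hP1 x).tsum_eq,
      ENNReal.ofReal_one]
  -- stationarity in ℝ≥0∞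
  have hstat' : ∀ y, ∑' x, p x * q x y = p y := by
    intro y
    have hle1 : ∀ x, P x y ≤ 1 := fun x => le_hasSum (hP1 x) y (fun j _ => hP0 x j)
    have hs : Summable (fun x => π x * P x y) := by
      refine Summable.of_nonneg_of_le (fun x => mul_nonneg (hπ0 x) (hP0 x y)) (fun x => ?_) hπS
      nlinarith [hπ0 x, hle1 x, hP0 x y]
    calc ∑' x, p x * q x y = ∑' x, ENNReal.ofReal (π x * P x y) := by
          simp [hp, hq, ENNReal.ofReal_mul (hπ0 _)]
      _ = ENNReal.ofReal (∑' x, π x * P x y) :=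
          (ENNReal.ofReal_tsum_of_nonneg (fun x => mul_nonneg (hπ0 x) (hP0 x y)) hs).symm
      _ = p y := by rw [hstat y]
  -- drift in ℝ≥0∞
  have hdriftE : ∀ x, ∑' y, q x y * ENNReal.ofReal (v y) ≤
      ENNReal.ofReal ((1 - c) * v x) + ENNReal.ofReal (b * (if x ∈ K then 1 else 0)) := by
    intro x
    have h1 : ∑' y, P x y * v y ≤ (1 - c) * v x + b * (if x ∈ K then 1 else 0) := by
      have := hdrift x; linarith
    calc ∑' y, q x y * ENNReal.ofReal (v y) = ∑' y, ENNReal.ofReal (P x y * v y) := by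
          simp [hq, ENNReal.ofReal_mul (hP0 x _)]
      _ = ENNReal.ofReal (∑' y, P x y * v y) :=
          (ENNReal.ofReal_tsum_of_nonneg (fun y => mul_nonneg (hP0 x y) (hv0 y)) (hPv x)).symm
      _ ≤ ENNReal.ofReal ((1 - c) * v x + b * (if x ∈ K then 1 else 0)) :=
          ENNReal.ofReal_le_ofReal h1
      _ ≤ _ := ENNReal.ofReal_add_le
  -- key finite-sum bound
  have key : ∀ F : Finset S, ∑ x ∈ F, π x * v x ≤ b / c := by
    intro F
    set N : ℝ := ∑ x ∈ F, v x with hNdef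
    have hvF : ∀ x ∈ F, v x ≤ N := fun x hx =>
      Finset.single_le_sum (fun i _ => hv0 i) hx
    set W : S → ℝ≥0∞ := fun x => ENNReal.ofReal (min (v x) N) with hW
    have hWleN : ∀ x, W x ≤ ENNReal.ofReal N :=
      fun x => ENNReal.ofReal_le_ofReal (min_le_right _ _)
    have hWlev : ∀ x, W x ≤ ENNReal.ofReal (v x) :=
      fun x => ENNReal.ofReal_le_ofReal (min_le_left _ _)
    -- row bound for the truncated function
    have hrow : ∀ x, ∑' y, q x y * W y ≤
        if v x ≤ N then ENNReal.ofReal (1 - c) * W x +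
          ENNReal.ofReal b * (if x ∈ K then 1 else 0)
        else W x := by
      intro x
      by_cases hx : v x ≤ N
      · rw [if_pos hx]
        have hWx : W x = ENNReal.ofReal (v x) := by
          simp only [hW, min_eq_left hx]
        have h1 : ∑' y, q x y * W y ≤ ∑' y, q x y * ENNReal.ofReal (v y) :=
          ENNReal.tsum_le_tsum (fun y => mul_le_mul_right (hWlev y) _)
        refine h1.trans ((hdriftE x).trans (le_of_eq ?_))
        rw [hWx, ← ENNReal.ofReal_mul (by linarith : (0:ℝ) ≤ 1 - c)]
        congr 1
        by_cases hK : x ∈ K <;> simp [hK]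
      · rw [if_neg hx]
        have hWx : W x = ENNReal.ofReal N := by
          simp only [hW, min_eq_right (le_of_not_ge hx)]
        calc ∑' y, q x y * W y ≤ ∑' y, q x y * ENNReal.ofReal N :=
              ENNReal.tsum_le_tsum (fun y => mul_le_mul_right (hWleN y) _)
          _ = (∑' y, q x y) * ENNReal.ofReal N := ENNReal.tsum_mul_right
          _ = W x := by rw [hqsum x, one_mul, hWx]
    -- Fubini: ∑ p W = ∑ p (QW)
    have hfub : ∑' x, p x * W x = ∑' x, p x * ∑' y, q x y * W y := by
      calc ∑' x, p x * W x = ∑' y, p y * W y := rfl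
        _ = ∑' y, (∑' x, p x * q x y) * W y := by simp_rw [hstat']
        _ = ∑' y, ∑' x, p x * q x y * W y := by simp_rw [ENNReal.tsum_mul_right]
        _ = ∑' x, ∑' y, p x * q x y * W y := ENNReal.tsum_comm
        _ = ∑' x, p x * ∑' y, q x y * W y := by
            simp_rw [mul_assoc, ENNReal.tsum_mul_left]
    set T1 : ℝ≥0∞ := ∑' x, (if v x ≤ N then p x * W x else 0) with hT1def
    set T2 : ℝ≥0∞ := ∑' x, (if v x ≤ N then 0 else p x * W x) with hT2def
    have hsplit : ∑' x, p x * W x = T1 + T2 := by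
      rw [hT1def, hT2def, ← ENNReal.tsum_add]
      congr 1; funext x; by_cases hx : v x ≤ N <;> simp [hx]
    -- pointwise bound after multiplying by p x
    have hg : ∀ x, p x * (∑' y, q x y * W y) ≤
        ENNReal.ofReal (1 - c) * (if v x ≤ N then p x * W x else 0) +
        ENNReal.ofReal b * (p x * (if x ∈ K then 1 else 0)) +
        (if v x ≤ N then 0 else p x * W x) := by
      intro x
      have h1 := mul_le_mul_right (hrow x) (p x)
      by_cases hx : v x ≤ N
      · rw [if_pos hx] at h1
        rw [if_pos hx, if_pos hx]
        refine h1.trans ?_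
        rw [mul_add, add_zero]
        apply add_le_add <;> rw [← mul_assoc, mul_comm (p x)] <;> rw [mul_assoc]
      · rw [if_neg hx] at h1
        rw [if_neg hx, if_neg hx]
        calc p x * (∑' y, q x y * W y) ≤ p x * W x := h1
          _ ≤ _ := le_add_self
    -- mass of K
    have hTK : ∑' x, p x * (if x ∈ K then 1 else 0) ≤ 1 := by
      calc ∑' x, p x * (if x ∈ K then 1 else 0) ≤ ∑' x, p x :=
            ENNReal.tsum_le_tsum (fun x => by by_cases hK : x ∈ K <;> simp [hK])
        _ = 1 := hpsum
    -- finiteness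
    have hTfin : ∑' x, p x * W x ≤ ENNReal.ofReal N := by
      calc ∑' x, p x * W x ≤ ∑' x, p x * ENNReal.ofReal N :=
            ENNReal.tsum_le_tsum (fun x => mul_le_mul_right (hWleN x) _)
        _ = (∑' x, p x) * ENNReal.ofReal N := ENNReal.tsum_mul_right
        _ = ENNReal.ofReal N := by rw [hpsum, one_mul]
    have hT1fin : T1 ≠ ⊤ := by
      refine ne_top_of_le_ne_top ofReal_ne_top (le_trans ?_ hTfin)
      rw [hsplit]; exact le_self_add
    have hT2fin : T2 ≠ ⊤ := by
      refine ne_top_of_le_ne_top ofReal_ne_top (le_trans ?_ hTfin)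
      rw [hsplit]; exact le_add_self
    -- main inequality
    have hmain : T1 + T2 ≤ (ENNReal.ofReal (1 - c) * T1 + ENNReal.ofReal b) + T2 := by
      calc T1 + T2 = ∑' x, p x * W x := hsplit.symm
        _ = ∑' x, p x * ∑' y, q x y * W y := hfub
        _ ≤ ∑' x, (ENNReal.ofReal (1 - c) * (if v x ≤ N then p x * W x else 0) +
              ENNReal.ofReal b * (p x * (if x ∈ K then 1 else 0)) +
              (if v x ≤ N then 0 else p x * W x)) := ENNReal.tsum_le_tsum hg
        _ = (ENNReal.ofReal (1 - c) * T1 +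
              ENNReal.ofReal b * ∑' x, p x * (if x ∈ K then 1 else 0)) + T2 := by
            rw [ENNReal.tsum_add, ENNReal.tsum_add, ENNReal.tsum_mul_left,
              ENNReal.tsum_mul_left]
        _ ≤ (ENNReal.ofReal (1 - c) * T1 + ENNReal.ofReal b) + T2 := by
            gcongr
            calc ENNReal.ofReal b * ∑' x, p x * (if x ∈ K then 1 else 0) ≤
                ENNReal.ofReal b * 1 := by gcongr
              _ = ENNReal.ofReal b := mul_one _
    have hT1le : T1 ≤ ENNReal.ofReal (1 - c) * T1 + ENNReal.ofReal b :=
      (ENNReal.add_le_add_iff_right hT2fin).mp hmain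
    -- pass to reals
    set t : ℝ := T1.toReal with ht
    have ht0 : 0 ≤ t := ENNReal.toReal_nonneg
    have htle : t ≤ (1 - c) * t + b := by
      have hrhs : (ENNReal.ofReal (1 - c) * T1 + ENNReal.ofReal b) ≠ ⊤ := by
        apply ENNReal.add_ne_top.mpr
        exact ⟨ENNReal.mul_ne_top ofReal_ne_top hT1fin, ofReal_ne_top⟩
      have := ENNReal.toReal_mono hrhs hT1le
      rwa [ENNReal.toReal_add (ENNReal.mul_ne_top ofReal_ne_top hT1fin) ofReal_ne_top,
        ENNReal.toReal_mul, ENNReal.toReal_ofReal (by linarith : (0:ℝ) ≤ 1 - c),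
        ENNReal.toReal_ofReal hb.le] at this
    have htbc : t ≤ b / c := by
      rw [le_div_iff₀ hc0]; nlinarith
    -- finite sum is below T1
    have hFsum : ENNReal.ofReal (∑ x ∈ F, π x * v x) ≤ T1 := by
      rw [ENNReal.ofReal_sum_of_nonneg (fun x _ => mul_nonneg (hπ0 x) (hv0 x))]
      refine le_trans (le_of_eq ?_) (ENNReal.sum_le_tsum F)
      refine Finset.sum_congr rfl (fun x hx => ?_)
      rw [if_pos (hvF x hx)]
      simp only [hp, hW]
      rw [min_eq_left (hvF x hx), ← ENNReal.ofReal_mul (hπ0 x)]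
    have := (ENNReal.ofReal_le_iff_le_toReal hT1fin).mp hFsum
    linarith
  have hnn : (0 : S → ℝ) ≤ fun x => π x * v x :=
    fun x => mul_nonneg (hπ0 x) (hv0 x)
  have hsum : Summable (fun x => π x * v x) := summable_of_sum_le hnn key
  exact ⟨hsum, hsum.tsum_le_of_sum_le key⟩
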